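/- Let n = 2k−1 with k ≥ 2, and let f be a graph automorphism of H(2k−1, k) fixing the empty set. If |X| = 2p with 1 ≤ p ≤ k−1, then |f(X)| = 2p or |f(X)| = n − 2p + 1. -/

import Mathlib

open Finset symmDiff
open scoped Classical

/-- `auxG a b = C(2a, a) * C(2b-1, b)`; for `a + b = k` this is the number of
common neighbours of `∅` and a `2a`-set in `H(2k-1, k)`. -/
def auxG (a b : ℕ) : ℕ := Nat.choose (2*a) a * Nat.choose (2*b-1) b

lemma aux_double (j : ℕ) : Nat.choose (2*j+2) (j+1) = 2 * Nat.choose (2*j+1) (j+1) := by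
  have h1 : Nat.choose (2*j+2) (j+1) = Nat.choose (2*j+1) j + Nat.choose (2*j+1) (j+1) :=
    Nat.choose_succ_succ (2*j+1) j
  have h2 : Nat.choose (2*j+1) j = Nat.choose (2*j+1) (j+1) := by
    have := Nat.choose_symm (n := 2*j+1) (k := j+1) (by omega)
    have e : 2*j+1 - (j+1) = j := by omega
    rw [e] at this
    exact this
  omega

lemma aux_lemA (a : ℕ) :
    (a+1) * Nat.choose (2*a+2) (a+1) = (2*(2*a+1)) * Nat.choose (2*a) a := by
  have h2 := Nat.add_one_mul_choose_eq (2*a) a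
  calc (a+1) * Nat.choose (2*a+2) (a+1)
      = 2 * (Nat.choose (2*a+1) (a+1) * (a+1)) := by rw [aux_double a]; ring
    _ = 2 * ((2*a+1) * Nat.choose (2*a) a) := by rw [← h2]
    _ = (2*(2*a+1)) * Nat.choose (2*a) a := by ring

lemma aux_lemB (c : ℕ) :
    (c+2) * Nat.choose (2*c+3) (c+2) = (2*(2*c+3)) * Nat.choose (2*c+1) (c+1) := by
  have h2 := Nat.add_one_mul_choose_eq (2*c+2) (c+1)
  have h2' : (2*c+3) * Nat.choose (2*c+2) (c+1) = Nat.choose (2*c+3) (c+2) * (c+2) := by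
    have e1 : 2*c+2+1 = 2*c+3 := by omega
    have e2 : c+1+1 = c+2 := by omega
    rw [e1, e2] at h2
    exact h2
  calc (c+2) * Nat.choose (2*c+3) (c+2)
      = Nat.choose (2*c+3) (c+2) * (c+2) := by ring
    _ = (2*c+3) * Nat.choose (2*c+2) (c+1) := h2'.symm
    _ = (2*c+3) * (2 * Nat.choose (2*c+1) (c+1)) := by rw [aux_double c]
    _ = (2*(2*c+3)) * Nat.choose (2*c+1) (c+1) := by ring

lemma auxG_rec (a c : ℕ) :
    auxG (a+1) (c+1) * ((a+1)*(2*c+3)) = auxG a (c+2) * ((2*a+1)*(c+2)) := by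
  have e1 : 2*(a+1) = 2*a+2 := by ring
  have e2 : 2*(c+1)-1 = 2*c+1 := by omega
  have e3 : 2*(c+2)-1 = 2*c+3 := by omega
  calc auxG (a+1) (c+1) * ((a+1)*(2*c+3))
      = ((a+1) * Nat.choose (2*a+2) (a+1)) * (Nat.choose (2*c+1) (c+1) * (2*c+3)) := by
        simp only [auxG, e1, e2]; ring
    _ = ((2*(2*a+1)) * Nat.choose (2*a) a) * (Nat.choose (2*c+1) (c+1) * (2*c+3)) := by
        rw [aux_lemA]
    _ = (Nat.choose (2*a) a * (2*a+1)) * ((2*(2*c+3)) * Nat.choose (2*c+1) (c+1)) := by ring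
    _ = (Nat.choose (2*a) a * (2*a+1)) * ((c+2) * Nat.choose (2*c+3) (c+2)) := by
        rw [aux_lemB]
    _ = auxG a (c+2) * ((2*a+1)*(c+2)) := by simp only [auxG, e3]; ring

lemma auxG_pos (a b : ℕ) (hb : 1 ≤ b) : 0 < auxG a b :=
  Nat.mul_pos (Nat.choose_pos (by omega)) (Nat.choose_pos (by omega))

lemma auxG_step (a c : ℕ) (h : a < c+1) : auxG (a+1) (c+1) < auxG a (c+2) := by
  have hrec := auxG_rec a c
  have hB : (2*a+1)*(c+2) < (a+1)*(2*c+3) := by nlinarith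
  have hY : 0 < auxG a (c+2) := auxG_pos a (c+2) (by omega)
  have : auxG (a+1) (c+1) * ((a+1)*(2*c+3)) < auxG a (c+2) * ((a+1)*(2*c+3)) := by
    rw [hrec]
    exact Nat.mul_lt_mul_of_pos_left hB hY
  exact Nat.lt_of_mul_lt_mul_right this

lemma auxG_strict : ∀ a' b' a b : ℕ, a + b = a' + b' → a < a' → a' ≤ b' →
    auxG a' b' < auxG a b := by
  intro a'
  induction a' with
  | zero => intro b' a b _ h _; omega
  | succ a' ih =>
    intro b' a b hsum h h2
    obtain ⟨c, rfl⟩ : ∃ c, b' = c + 1 := ⟨b' - 1, by omega⟩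
    have step : auxG (a'+1) (c+1) < auxG a' (c+2) := auxG_step a' c (by omega)
    rcases Nat.lt_or_ge a a' with h' | h'
    · exact lt_trans step (ih (c+2) a b (by omega) h' (by omega))
    · have ha : a = a' := by omega
      subst ha
      have hb : b = c + 2 := by omega
      subst hb
      exact step

lemma auxG_symm (a b : ℕ) (ha : 1 ≤ a) (hb : 1 ≤ b) : auxG a b = auxG b a := by
  obtain ⟨a', rfl⟩ : ∃ a', a = a' + 1 := ⟨a - 1, by omega⟩
  obtain ⟨b', rfl⟩ : ∃ b', b = b' + 1 := ⟨b - 1, by omega⟩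
  have e1 : 2*(a'+1) = 2*a'+2 := by ring
  have e2 : 2*(b'+1)-1 = 2*b'+1 := by omega
  have e3 : 2*(b'+1) = 2*b'+2 := by ring
  have e4 : 2*(a'+1)-1 = 2*a'+1 := by omega
  simp only [auxG]
  rw [e2, e4, e1, e3, aux_double a', aux_double b']
  ring

lemma auxG_inj (a b a' b' : ℕ) (hsum : a + b = a' + b') (hab : a ≤ b) (hab' : a' ≤ b')
    (h : auxG a b = auxG a' b') : a = a' := by
  rcases lt_trichotomy a a' with hl | he | hl
  · have := auxG_strict a' b' a b hsum hl hab'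
    omega
  · exact he
  · have := auxG_strict a b a' b' (by omega) hl hab
    omega

lemma auxG_key (k p q : ℕ) (hk : 2 ≤ k) (hp1 : 1 ≤ p) (hp2 : p + 1 ≤ k)
    (hq1 : 1 ≤ q) (hq2 : q + 1 ≤ k)
    (h : auxG p (k-p) = auxG q (k-q)) : q = p ∨ q = k - p := by
  rcases le_or_gt p (k-p) with h1 | h1 <;> rcases le_or_gt q (k-q) with h2 | h2
  · left
    exact (auxG_inj p (k-p) q (k-q) (by omega) h1 h2 h).symm
  · right
    rw [auxG_symm q (k-q) hq1 (by omega)] at h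
    have := auxG_inj p (k-p) (k-q) q (by omega) h1 (by omega) h
    omega
  · right
    rw [auxG_symm p (k-p) hp1 (by omega)] at h
    have := auxG_inj (k-p) p q (k-q) (by omega) (by omega) h2 h
    omega
  · left
    rw [auxG_symm p (k-p) hp1 (by omega), auxG_symm q (k-q) hq1 (by omega)] at h
    have := auxG_inj (k-p) p (k-q) q (by omega) (by omega) (by omega) h
    omega

/-- The graph `H(n,k)` on subsets of `[n]`: `X ~ Y` iff `|X ∆ Y| = k`. -/
def HGraph (n k : ℕ) : SimpleGraph (Finset (Fin n)) where
  Adj X Y := (X ∆ Y).card = k ∧ X ≠ Y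
  symm := by
    constructor
    intro X Y h
    exact ⟨by rw [symmDiff_comm]; exact h.1, h.2.symm⟩
  loopless := ⟨fun X h => h.2 rfl⟩

lemma aux_card_symmDiff {n : ℕ} (s t : Finset (Fin n)) :
    (s ∆ t).card + 2 * (s ∩ t).card = s.card + t.card := by
  have h1 : s ∆ t = (s \ t) ∪ (t \ s) := by
    rw [symmDiff_def]; rfl
  have h2 : ((s \ t) ∪ (t \ s)).card = (s \ t).card + (t \ s).card :=
    card_union_of_disjoint (disjoint_sdiff_sdiff)
  have h12 : (s ∆ t).card = (s \ t).card + (t \ s).card := by rw [h1]; exact h2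
  have h3 := card_sdiff_add_card_inter s t
  have h4 := card_sdiff_add_card_inter t s
  have h5 : (t ∩ s).card = (s ∩ t).card := by rw [inter_comm]
  omega

lemma aux_count {n : ℕ} (p j : ℕ) (X : Finset (Fin n)) :
    (univ.filter (fun A : Finset (Fin n) => (A ∩ X).card = p ∧ (A \ X).card = j)).card
      = X.card.choose p * (n - X.card).choose j := by
  have hbij : (univ.filter (fun A : Finset (Fin n) =>
      (A ∩ X).card = p ∧ (A \ X).card = j)).card
      = (X.powersetCard p ×ˢ Xᶜ.powersetCard j).card := by
    apply Finset.card_bij (fun A _ => (A ∩ X, A \ X))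
    · intro A hA
      simp only [mem_filter, mem_univ, true_and] at hA
      simp only [Finset.mem_product, Finset.mem_powersetCard]
      refine ⟨⟨inter_subset_right, hA.1⟩, ⟨?_, hA.2⟩⟩
      intro x hx
      simp only [mem_sdiff] at hx
      simp only [Finset.mem_compl]
      exact hx.2
    · intro A hA B hB h
      have h1 : A ∩ X = B ∩ X := congrArg Prod.fst h
      have h2 : A \ X = B \ X := congrArg Prod.snd h
      have eA : A ∩ X ∪ A \ X = A := by
        ext x; simp only [mem_union, mem_inter, mem_sdiff]; tauto
      have eB : B ∩ X ∪ B \ X = B := by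
        ext x; simp only [mem_union, mem_inter, mem_sdiff]; tauto
      rw [← eA, ← eB, h1, h2]
    · rintro ⟨B, C⟩ hBC
      simp only [Finset.mem_product, Finset.mem_powersetCard] at hBC
      obtain ⟨⟨hBX, hBp⟩, hCX, hCj⟩ := hBC
      refine ⟨B ∪ C, ?_, ?_⟩
      · simp only [mem_filter, mem_univ, true_and]
        have hCXd : ∀ x ∈ C, x ∉ X := by
          intro x hx
          have := hCX hx
          simpa using this
        have e1 : (B ∪ C) ∩ X = B := by
          ext x
          simp only [mem_inter, mem_union]
          constructor
          · rintro ⟨hx1 | hx1, hx2⟩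
            · exact hx1
            · exact absurd hx2 (hCXd x hx1)
          · intro hx; exact ⟨Or.inl hx, hBX hx⟩
        have e2 : (B ∪ C) \ X = C := by
          ext x
          simp only [mem_sdiff, mem_union]
          constructor
          · rintro ⟨hx1 | hx1, hx2⟩
            · exact absurd (hBX hx1) hx2
            · exact hx1
          · intro hx; exact ⟨Or.inr hx, hCXd x hx⟩
        rw [e1, e2]
        exact ⟨hBp, hCj⟩
      · have hCXd : ∀ x ∈ C, x ∉ X := by
          intro x hx
          have := hCX hx
          simpa using this
        have e1 : (B ∪ C) ∩ X = B := by
          ext x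
          simp only [mem_inter, mem_union]
          constructor
          · rintro ⟨hx1 | hx1, hx2⟩
            · exact hx1
            · exact absurd hx2 (hCXd x hx1)
          · intro hx; exact ⟨Or.inl hx, hBX hx⟩
        have e2 : (B ∪ C) \ X = C := by
          ext x
          simp only [mem_sdiff, mem_union]
          constructor
          · rintro ⟨hx1 | hx1, hx2⟩
            · exact absurd (hBX hx1) hx2
            · exact hx1
          · intro hx; exact ⟨Or.inr hx, hCXd x hx⟩
        rw [e1, e2]
  rw [hbij, Finset.card_product, Finset.card_powersetCard, Finset.card_powersetCard,
    Finset.card_compl, Fintype.card_fin]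

/-- The common-neighbour count of `∅` and a `2p`-set in `H(n,k)` with `n = 2k-1`. -/
lemma aux_Ncard {n k p : ℕ} (hk : 2 ≤ k) (hn : n = 2 * k - 1) (hp1 : 1 ≤ p)
    (hp2 : p ≤ k - 1) (X : Finset (Fin n)) (hX : X.card = 2 * p) :
    (univ.filter (fun A : Finset (Fin n) =>
        (HGraph n k).Adj ∅ A ∧ (HGraph n k).Adj X A)).card
      = (2*p).choose p * (n - 2*p).choose (k - p) := by
  have hfe : (univ.filter (fun A : Finset (Fin n) =>
      (HGraph n k).Adj ∅ A ∧ (HGraph n k).Adj X A))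
      = (univ.filter (fun A : Finset (Fin n) => (A ∩ X).card = p ∧ (A \ X).card = k - p)) := by
    ext A
    simp only [mem_filter, mem_univ, true_and]
    constructor
    · rintro ⟨⟨hA1, hA2⟩, hA3, hA4⟩
      have hAcard : A.card = k := by
        rw [show (∅ : Finset (Fin n)) ∆ A = A by simp] at hA1
        exact hA1
      have hsd := aux_card_symmDiff X A
      have hint : (X ∩ A).card = p := by omega
      have hint' : (A ∩ X).card = p := by rw [inter_comm]; exact hint
      have hsdiff := card_sdiff_add_card_inter A X
      exact ⟨hint', by omega⟩
    · rintro ⟨h1, h2⟩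
      have hsub : (A ∩ X).card ≤ X.card := card_le_card inter_subset_right
      have hAcard : A.card = k := by
        have := card_sdiff_add_card_inter A X
        omega
      have hsd := aux_card_symmDiff X A
      have hXA : (X ∆ A).card = k := by
        have hint : (X ∩ A).card = p := by rw [inter_comm]; exact h1
        omega
      refine ⟨⟨?_, ?_⟩, hXA, ?_⟩
      · rw [show (∅ : Finset (Fin n)) ∆ A = A by simp]
        exact hAcard
      · intro h
        rw [← h, card_empty] at hAcard
        omega
      · intro h
        rw [h, symmDiff_self] at hXA
        rw [show ((⊥ : Finset (Fin n)).card = 0) from rfl] at hXA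
        omega
  rw [hfe, aux_count, hX]

/-- For `n = 2k - 1`, `k ≥ 2`: if `f` is an automorphism of `H(2k-1,k)` fixing `∅` and
`|X| = 2p` with `1 ≤ p ≤ k - 1`, then `|f(X)| = 2p` or `|f(X)| = n - 2p + 1`. -/
theorem stmt_7 (k n p : ℕ) (hk : 2 ≤ k) (hn : n = 2 * k - 1) (hp1 : 1 ≤ p) (hp2 : p ≤ k - 1)
    (f : HGraph n k ≃g HGraph n k) (hf : f ∅ = ∅)
    (X : Finset (Fin n)) (hX : X.card = 2 * p) :
    (f X).card = 2 * p ∨ (f X).card = n - 2 * p + 1 := by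
  have hf' : f.symm ∅ = ∅ := by
    conv_lhs => rw [← hf]
    exact f.toEquiv.symm_apply_apply ∅
  set N : Finset (Fin n) → Finset (Finset (Fin n)) :=
    fun Z => univ.filter (fun A => (HGraph n k).Adj ∅ A ∧ (HGraph n k).Adj Z A) with hN
  have hNX : (N X).card = (2*p).choose p * (n - 2*p).choose (k-p) :=
    aux_Ncard hk hn hp1 hp2 X hX
  -- `f` gives a bijection between common neighbourhoods
  have hbij : (N X).card = (N (f X)).card := by
    apply Finset.card_bij (fun A _ => f A)
    · intro A hA
      simp only [hN, mem_filter, mem_univ, true_and] at hA ⊢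
      refine ⟨?_, f.map_adj_iff.mpr hA.2⟩
      rw [← hf]
      exact f.map_adj_iff.mpr hA.1
    · intro A _ B _ h
      exact f.toEquiv.injective h
    · intro B hB
      simp only [hN, mem_filter, mem_univ, true_and] at hB
      refine ⟨f.symm B, ?_, f.toEquiv.apply_symm_apply B⟩
      simp only [hN, mem_filter, mem_univ, true_and]
      constructor
      · rw [← hf']
        exact f.symm.map_adj_iff.mpr hB.1
      · have h2 : (HGraph n k).Adj (f.symm (f X)) (f.symm B) := f.symm.map_adj_iff.mpr hB.2
        have hx : f.symm (f X) = X := f.toEquiv.symm_apply_apply X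
        rwa [hx] at h2
  -- the common neighbourhood of `∅` and `X` is nonempty
  have hpos : 0 < (N X).card := by
    rw [hNX]
    exact Nat.mul_pos (Nat.choose_pos (by omega)) (Nat.choose_pos (by omega))
  obtain ⟨A0, hA0⟩ := Finset.card_pos.mp hpos
  simp only [hN, mem_filter, mem_univ, true_and] at hA0
  have hAdj1 : (HGraph n k).Adj ∅ (f A0) := by
    rw [← hf]; exact f.map_adj_iff.mpr hA0.1
  have hAdj2 : (HGraph n k).Adj (f X) (f A0) := f.map_adj_iff.mpr hA0.2
  have hfA0card : (f A0 : Finset (Fin n)).card = k := by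
    have h1 := hAdj1.1
    rwa [show (∅ : Finset (Fin n)) ∆ (f A0) = f A0 by simp] at h1
  have hsd := aux_card_symmDiff (f X) (f A0)
  have hsdk : ((f X : Finset (Fin n)) ∆ (f A0)).card = k := hAdj2.1
  set q := ((f X : Finset (Fin n)) ∩ (f A0)).card with hq
  have hfXcard : (f X : Finset (Fin n)).card = 2 * q := by omega
  have hq1 : 1 ≤ q := by
    by_contra h
    have hq0 : (f X : Finset (Fin n)).card = 0 := by omega
    have : (f X : Finset (Fin n)) = ∅ := Finset.card_eq_zero.mp hq0
    rw [← hf] at this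
    have hXe : X = ∅ := f.toEquiv.injective this
    rw [hXe, card_empty] at hX
    omega
  have hq2 : q ≤ k - 1 := by
    have h1 := Finset.card_le_univ (f X)
    rw [Fintype.card_fin] at h1
    omega
  have hNfX : (N (f X)).card = (2*q).choose q * (n - 2*q).choose (k-q) :=
    aux_Ncard hk hn hq1 hq2 (f X) hfXcard
  have e1 : n - 2*p = 2*(k-p) - 1 := by omega
  have e2 : n - 2*q = 2*(k-q) - 1 := by omega
  have hGeq : auxG p (k-p) = auxG q (k-q) := by
    have h1 : (N X).card = auxG p (k-p) := by rw [hNX, e1]; rfl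
    have h2 : (N (f X)).card = auxG q (k-q) := by rw [hNfX, e2]; rfl
    rw [← h1, ← h2, hbij]
  have := auxG_key k p q hk hp1 (by omega) hq1 (by omega) hGeq
  rcases this with h | h
  · left; omega
  · right; omega
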